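/- arXiv:2203.13014 — 4 statements merged into one kernel-verified Lean document; each statement's English description precedes it below -/
import Mathlib

section
/- The iterated integral satisfies the shuffle product identity: for one-forms pulled back along a path γ to functions f₁,…,f_n and g₁,…,g_m, the product of the iterated integrals ∫_γ ω₁⋯ω_n and ∫_γ ω₁'⋯ω_m' equals the iterated integral of the shuffle product of the words (ω₁⋯ω_n) ⧢ (ω₁'⋯ω_m'). -/
/-- The iterated integral of a word of one-forms along a path, written in terms of
the pullback functions: the head of the list is the outermost integrand. -/
noncomputable def iterInt (a : ℝ) : List (ℝ → ℂ) → ℝ → ℂ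
  | [], _ => 1
  | f :: fs, b => ∫ s in a..b, f s * iterInt a fs s

/-- All shuffles of two words. -/
def shuffles {α : Type*} : List α → List α → List (List α)
  | [], ys => [ys]
  | x :: xs, [] => [x :: xs]
  | x :: xs, y :: ys =>
      (shuffles xs (y :: ys)).map (x :: ·) ++ (shuffles (x :: xs) ys).map (y :: ·)
termination_by xs ys => xs.length + ys.length

lemma iterInt_cons (a : ℝ) (f : ℝ → ℂ) (fs : List (ℝ → ℂ)) (b : ℝ) :
    iterInt a (f :: fs) b = ∫ s in a..b, f s * iterInt a fs s := rfl

lemma continuous_iterInt (a : ℝ) (fs : List (ℝ → ℂ)) (h : ∀ f ∈ fs, Continuous f) :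
    Continuous (iterInt a fs) := by
  induction fs with
  | nil => exact continuous_const
  | cons f fs ih =>
    have hf := h f (by simp)
    have hfs : Continuous (iterInt a fs) := ih fun g hg => h g (List.mem_cons_of_mem _ hg)
    exact intervalIntegral.continuous_primitive
      (fun c d => (hf.mul hfs).intervalIntegrable c d) a

lemma hasDerivAt_iterInt_cons (a : ℝ) (f : ℝ → ℂ) (fs : List (ℝ → ℂ))
    (hf : Continuous f) (h : ∀ g ∈ fs, Continuous g) (b : ℝ) :
    HasDerivAt (iterInt a (f :: fs)) (f b * iterInt a fs b) b := by
  have hc : Continuous fun s => f s * iterInt a fs s := hf.mul (continuous_iterInt a fs h)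
  exact intervalIntegral.integral_hasDerivAt_right (hc.intervalIntegrable a b)
    (hc.stronglyMeasurableAtFilter _ _) hc.continuousAt

lemma shuffles_mem {α : Type*} : ∀ (xs ys : List α), ∀ w ∈ shuffles xs ys,
    ∀ x ∈ w, x ∈ xs ∨ x ∈ ys := by
  intro xs ys
  induction xs, ys using shuffles.induct with
  | case1 ys => intro w hw x hx; simp [shuffles] at hw; subst hw; exact Or.inr hx
  | case2 x xs => intro w hw z hz; simp [shuffles] at hw; subst hw; exact Or.inl hz
  | case3 x xs y ys ih1 ih2 =>
    intro w hw z hz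
    simp only [shuffles, List.mem_append, List.mem_map] at hw
    rcases hw with ⟨v, hv, rfl⟩ | ⟨v, hv, rfl⟩
    · rcases List.mem_cons.1 hz with rfl | hz'
      · exact Or.inl (by simp)
      · rcases ih1 v hv z hz' with h | h
        · exact Or.inl (by simp [h])
        · exact Or.inr h
    · rcases List.mem_cons.1 hz with rfl | hz'
      · exact Or.inr (by simp)
      · rcases ih2 v hv z hz' with h | h
        · exact Or.inl h
        · exact Or.inr (by simp [h])

lemma hasDerivAt_listSum (l : List (List (ℝ → ℂ))) (F : List (ℝ → ℂ) → ℝ → ℂ)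
    (F' : List (ℝ → ℂ) → ℂ) (b : ℝ) (h : ∀ w ∈ l, HasDerivAt (F w) (F' w) b) :
    HasDerivAt (fun t => (l.map (fun w => F w t)).sum) ((l.map F').sum) b := by
  induction l with
  | nil => simpa using hasDerivAt_const b (0 : ℂ)
  | cons w l ih =>
    simp only [List.map_cons, List.sum_cons]
    exact (h w (by simp)).add (ih fun v hv => h v (by simp [hv]))

lemma iterInt_shuffle_aux (a : ℝ) : ∀ (fs gs : List (ℝ → ℂ)),
    (∀ f ∈ fs, Continuous f) → (∀ g ∈ gs, Continuous g) → ∀ b : ℝ,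
    iterInt a fs b * iterInt a gs b
      = ((shuffles fs gs).map (fun w => iterInt a w b)).sum := by
  intro fs gs
  induction fs, gs using shuffles.induct with
  | case1 ys => intro _ _ b; simp [shuffles, iterInt]
  | case2 x xs => intro _ _ b; simp [shuffles, iterInt]
  | case3 x xs y ys ih1 ih2 =>
    intro hf hg b
    have hx : Continuous x := hf x (by simp)
    have hy : Continuous y := hg y (by simp)
    have hxs : ∀ f ∈ xs, Continuous f := fun f h => hf f (by simp [h])
    have hys : ∀ g ∈ ys, Continuous g := fun g h => hg g (by simp [h])
    have ih1' := ih1 hxs hg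
    have ih2' := ih2 hf hys
    have hw1 : ∀ w ∈ shuffles xs (y :: ys), ∀ f ∈ w, Continuous f := fun w hw f hfw =>
      (shuffles_mem _ _ w hw f hfw).elim (hxs f) (hg f)
    have hw2 : ∀ w ∈ shuffles (x :: xs) ys, ∀ f ∈ w, Continuous f := fun w hw f hfw =>
      (shuffles_mem _ _ w hw f hfw).elim (hf f) (hys f)
    set L : ℝ → ℂ := fun t => iterInt a (x :: xs) t * iterInt a (y :: ys) t with hLdef
    set R : ℝ → ℂ :=
      fun t => ((shuffles (x :: xs) (y :: ys)).map (fun w => iterInt a w t)).sum with hRdef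
    have hRsplit : R = fun t =>
        ((shuffles xs (y :: ys)).map (fun w => iterInt a (x :: w) t)).sum
          + ((shuffles (x :: xs) ys).map (fun w => iterInt a (y :: w) t)).sum := by
      funext t
      simp [hRdef, shuffles, List.map_map, Function.comp_def]
    have key : ∀ t, HasDerivAt (fun u => L u - R u) 0 t := by
      intro t
      have dL : HasDerivAt L
          (x t * iterInt a xs t * iterInt a (y :: ys) t
            + iterInt a (x :: xs) t * (y t * iterInt a ys t)) t :=
        (hasDerivAt_iterInt_cons a x xs hx hxs t).mul
          (hasDerivAt_iterInt_cons a y ys hy hys t)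
      have dR1 : HasDerivAt
          (fun u => ((shuffles xs (y :: ys)).map (fun w => iterInt a (x :: w) u)).sum)
          (((shuffles xs (y :: ys)).map (fun w => x t * iterInt a w t)).sum) t :=
        hasDerivAt_listSum _ _ _ _ fun w hw =>
          hasDerivAt_iterInt_cons a x w hx (hw1 w hw) t
      have dR2 : HasDerivAt
          (fun u => ((shuffles (x :: xs) ys).map (fun w => iterInt a (y :: w) u)).sum)
          (((shuffles (x :: xs) ys).map (fun w => y t * iterInt a w t)).sum) t :=
        hasDerivAt_listSum _ _ _ _ fun w hw =>
          hasDerivAt_iterInt_cons a y w hy (hw2 w hw) t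
      have dR : HasDerivAt R
          (x t * (iterInt a xs t * iterInt a (y :: ys) t)
            + y t * (iterInt a (x :: xs) t * iterInt a ys t)) t := by
        rw [hRsplit, ih1' t, ih2' t]
        have := dR1.add dR2
        rwa [List.sum_map_mul_left, List.sum_map_mul_left] at this
      have : HasDerivAt (fun u => L u - R u) _ t := dL.sub dR
      convert this using 1
      ring
    have hdiff : Differentiable ℝ fun u => L u - R u := fun t => (key t).differentiableAt
    have hderiv : ∀ t, deriv (fun u => L u - R u) t = 0 := fun t => (key t).deriv
    have h0 : L a - R a = 0 := by
      have hLa : L a = 0 := by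
        simp [hLdef, iterInt_cons, intervalIntegral.integral_same]
      have hRa : R a = 0 := by
        rw [hRsplit]
        simp [iterInt_cons, intervalIntegral.integral_same]
      simp [hLa, hRa]
    have hconst := is_const_of_deriv_eq_zero hdiff hderiv b a
    have : L b - R b = 0 := by rw [hconst, h0]
    have := sub_eq_zero.mp this
    exact this

/-- Shuffle product identity for iterated integrals: the product of the iterated
integrals of two words equals the sum of the iterated integrals of all their
shuffles. -/
theorem iterInt_shuffle (a b : ℝ) (fs gs : List (ℝ → ℂ))
    (hf : ∀ f ∈ fs, Continuous f) (hg : ∀ g ∈ gs, Continuous g) :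
    iterInt a fs b * iterInt a gs b
      = ((shuffles fs gs).map (fun w => iterInt a w b)).sum := by
  exact iterInt_shuffle_aux a fs gs hf hg b
end

section
/- Iterated integrals satisfy the path composition formula: if γ₁ and γ₂ are composable paths (the endpoint of γ₂ equals the initial point of γ₁), then ∫_{γ₁γ₂} ω₁⋯ω_n = ∑_{k=0}^n (∫_{γ₁} ω₁⋯ω_k)·(∫_{γ₂} ω_{k+1}⋯ω_n), where the iterated integral of the empty word is 1. -/
lemma iterInt_continuous (a : ℝ) (ws : List (ℝ → ℂ)) (hw : ∀ f ∈ ws, Continuous f) :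
    Continuous (iterInt a ws) := by
  induction ws with
  | nil => exact continuous_const
  | cons f fs IH =>
      have hf : Continuous f := hw f (by simp)
      have hG : Continuous (iterInt a fs) := IH (fun g hg => hw g (by simp [hg]))
      have hcont : Continuous fun s => f s * iterInt a fs s := hf.mul hG
      exact intervalIntegral.continuous_primitive
        (fun x y => hcont.intervalIntegrable x y) a

/-- Path composition formula for iterated integrals: for the composite path
`γ₁γ₂` (first traverse `γ₂`, over `[a,b]`, then `γ₁`, over `[b,c]`),
`∫_{γ₁γ₂} ω₁⋯ω_n = ∑_{k=0}^n (∫_{γ₁} ω₁⋯ω_k) (∫_{γ₂} ω_{k+1}⋯ω_n)`,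
with the iterated integral of the empty word equal to `1`. -/
theorem iterInt_path_composition (a b c : ℝ) (ws : List (ℝ → ℂ))
    (hw : ∀ f ∈ ws, Continuous f) :
    iterInt a ws c
      = ∑ k ∈ Finset.range (ws.length + 1),
          iterInt b (ws.take k) c * iterInt a (ws.drop k) b := by
  induction ws generalizing c with
  | nil => simp [iterInt]
  | cons f fs IH =>
      have hf : Continuous f := hw f (by simp)
      have hw' : ∀ g ∈ fs, Continuous g := fun g hg => hw g (by simp [hg])
      have hG : Continuous (iterInt a fs) := iterInt_continuous a fs hw'
      have hcont : Continuous fun s => f s * iterInt a fs s := hf.mul hG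
      have hsplit :
          iterInt a (f :: fs) c
            = (∫ s in a..b, f s * iterInt a fs s) + ∫ s in b..c, f s * iterInt a fs s := by
        rw [iterInt, ← intervalIntegral.integral_add_adjacent_intervals
          (hcont.intervalIntegrable a b) (hcont.intervalIntegrable b c)]
      have htail :
          (∫ s in b..c, f s * iterInt a fs s)
            = ∑ k ∈ Finset.range (fs.length + 1),
                iterInt b (f :: fs.take k) c * iterInt a (fs.drop k) b := by
        have h1 : (∫ s in b..c, f s * iterInt a fs s)
            = ∫ s in b..c, ∑ k ∈ Finset.range (fs.length + 1),
                f s * iterInt b (fs.take k) s * iterInt a (fs.drop k) b := by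
          refine intervalIntegral.integral_congr fun s _ => ?_
          rw [IH s hw', Finset.mul_sum]
          exact Finset.sum_congr rfl fun k _ => by ring
        rw [h1, intervalIntegral.integral_finset_sum]
        · refine Finset.sum_congr rfl fun k _ => ?_
          rw [iterInt, ← intervalIntegral.integral_mul_const]
        · intro k _
          have : Continuous fun s => f s * iterInt b (fs.take k) s * iterInt a (fs.drop k) b :=
            (hf.mul (iterInt_continuous b _ fun g hg => hw' g (List.mem_of_mem_take hg))).mul
              continuous_const
          exact this.intervalIntegrable b c
      rw [hsplit, htail]
      conv_rhs => rw [show (f :: fs).length + 1 = fs.length + 1 + 1 from rfl,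
        Finset.sum_range_succ']
      simp only [List.take_succ_cons, List.drop_succ_cons, List.take_zero, List.drop_zero]
      rw [show iterInt b [] c = 1 from rfl, one_mul, show iterInt a (f :: fs) b
        = ∫ s in a..b, f s * iterInt a fs s from rfl]
      ring
end

section
/- For 0 < x < 1 and a tangent-vector regularisation parameter v > 0, the shuffle-regularised iterated integral of dlog ξ followed by dlog(1−ξ)⁻ᵖᵘˡˡᵇᵃᶜᵏ from 0 to x satisfies: ∫_{v⃗₀}^x ω₁ω₂ = log(x/v)·log(1−x) + Li₂(x), where ω₁ = dξ/ξ, ω₂ = dξ/(ξ−1), and Li₂(x) = ∑_{n≥1} xⁿ/n². -/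
open Filter Topology

/-- Real-valued iterated integral of a word of pullback functions; the head of the
list is the outermost integrand, so the word `ω₁ω₂` is the list `[f₂, f₁]`. -/
noncomputable def iterIntR (a : ℝ) : List (ℝ → ℝ) → ℝ → ℝ
  | [], _ => 1
  | f :: fs, b => ∫ s in a..b, f s * iterIntR a fs s

/-- The dilogarithm `Li₂(x) = ∑_{n ≥ 1} xⁿ/n²`. -/
noncomputable def Li2 (x : ℝ) : ℝ := ∑' n : ℕ, x ^ (n + 1) / ((n + 1) : ℝ) ^ 2

lemma hasDerivAt_Li2 {y : ℝ} (hy : |y| < 1) :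
    HasDerivAt Li2 (∑' n : ℕ, y ^ n / ((n + 1) : ℝ)) y := by
  set r : ℝ := (|y| + 1) / 2 with hr
  have hr0 : 0 ≤ r := by positivity
  have hyr : |y| < r := by rw [hr]; linarith
  have hr1 : r < 1 := by rw [hr]; linarith
  have := hasDerivAt_tsum_of_isPreconnected
    (u := fun n : ℕ => r ^ n) (g := fun (n : ℕ) (z : ℝ) => z ^ (n + 1) / ((n + 1) : ℝ) ^ 2)
    (g' := fun (n : ℕ) (z : ℝ) => z ^ n / ((n + 1) : ℝ))
    (t := Set.Ioo (-r) r) (y₀ := 0) (y := y)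
    (summable_geometric_of_lt_one hr0 hr1) isOpen_Ioo (convex_Ioo _ _).isPreconnected
    ?_ ?_ (by have h0 := abs_nonneg y; constructor <;> [linarith; linarith]) ?_ ?_
  · exact this
  · intro n z hz
    have h := (hasDerivAt_pow (n + 1) z).div_const (((n : ℝ) + 1) ^ 2)
    convert h using 1
    · rfl
    push_cast
    have : ((n : ℝ) + 1) ≠ 0 := by positivity
    field_simp
  · intro n z hz
    have hz' : |z| ≤ r := by
      rw [abs_le]; exact ⟨hz.1.le, hz.2.le⟩
    have h1 : ‖z ^ n / ((n : ℝ) + 1)‖ ≤ |z| ^ n := by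
      rw [Real.norm_eq_abs, abs_div, abs_pow]
      have : (1 : ℝ) ≤ |((n : ℝ) + 1)| := by
        rw [abs_of_pos (by positivity)]; simp
      calc |z| ^ n / |((n : ℝ) + 1)| ≤ |z| ^ n / 1 :=
            div_le_div_of_nonneg_left (by positivity) one_pos this
        _ = |z| ^ n := div_one _
    calc ‖z ^ n / ((n : ℝ) + 1)‖ ≤ |z| ^ n := h1
      _ ≤ r ^ n := pow_le_pow_left₀ (abs_nonneg _) hz' n
  · simpa using summable_zero
  · constructor <;> [linarith [neg_abs_le y]; linarith [le_abs_self y]]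

lemma Li2_zero : Li2 0 = 0 := by simp [Li2]

lemma hasDerivAt_Li2' {y : ℝ} (h0 : 0 < y) (h1 : y < 1) :
    HasDerivAt Li2 (-Real.log (1 - y) / y) y := by
  have hy : |y| < 1 := by rw [abs_of_pos h0]; exact h1
  have hs := Real.hasSum_pow_div_log_of_abs_lt_one hy
  have hs' : HasSum (fun n : ℕ => y ^ n / ((n + 1) : ℝ)) (-Real.log (1 - y) / y) := by
    have := hs.div_const y
    convert this using 2 with n
    · rfl
    rw [pow_succ]
    field_simp
  have := hasDerivAt_Li2 hy
  rwa [hs'.tsum_eq] at this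

lemma iter_eval {x a : ℝ} (hx1 : x < 1) (ha0 : 0 < a) (hax : a < x) :
    iterIntR a [fun t => 1 / (t - 1), fun t => 1 / t] x
      = Real.log x * Real.log (1 - x) + Li2 x - Real.log a * Real.log (1 - x) - Li2 a := by
  have huIcc : Set.uIcc a x = Set.Icc a x := Set.uIcc_of_le hax.le
  have key : iterIntR a [fun t => 1 / (t - 1), fun t => 1 / t] x
      = ∫ s in a..x, (1 / (s - 1)) * (Real.log s - Real.log a) := by
    simp only [iterIntR]
    apply intervalIntegral.integral_congr
    intro s hs
    rw [huIcc] at hs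
    have hs0 : 0 < s := lt_of_lt_of_le ha0 hs.1
    simp only [mul_one]
    rw [integral_one_div, Real.log_div (ne_of_gt hs0) (ne_of_gt ha0)]
    intro h0
    rw [Set.uIcc_of_le hs.1] at h0
    exact absurd h0.1 (not_le.mpr ha0)
  rw [key]
  set H : ℝ → ℝ := fun s => Real.log s * Real.log (1 - s) + Li2 s - Real.log a * Real.log (1 - s)
    with hH
  have hderiv : ∀ s ∈ Set.uIcc a x,
      HasDerivAt H ((1 / (s - 1)) * (Real.log s - Real.log a)) s := by
    intro s hs
    rw [huIcc] at hs
    have hs0 : 0 < s := lt_of_lt_of_le ha0 hs.1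
    have hs1 : s < 1 := lt_of_le_of_lt hs.2 hx1
    have h1s : (1 : ℝ) - s ≠ 0 := by linarith
    have hlog : HasDerivAt Real.log s⁻¹ s := Real.hasDerivAt_log (ne_of_gt hs0)
    have hlog1 : HasDerivAt (fun t => Real.log (1 - t)) (-(1 - s)⁻¹) s := by
      have h2 : HasDerivAt (fun t : ℝ => 1 - t) (-1) s := by
        exact (hasDerivAt_id' s).const_sub 1
      have := h2.log h1s
      rw [neg_div, one_div] at this; exact this
    have hLi : HasDerivAt Li2 (-Real.log (1 - s) / s) s := hasDerivAt_Li2' hs0 hs1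
    have := ((hlog.mul hlog1).add hLi).sub (hlog1.const_mul (Real.log a))
    convert this using 1
    · rfl
    · rfl
    · rfl
    have hsne : s ≠ 0 := ne_of_gt hs0
    have h1s' : s - 1 ≠ 0 := fun h => h1s (by linarith [sub_eq_zero.mp h])
    field_simp
    ring
  have hcont : IntervalIntegrable (fun s => (1 / (s - 1)) * (Real.log s - Real.log a))
      MeasureTheory.volume a x := by
    apply ContinuousOn.intervalIntegrable
    rw [huIcc]
    apply ContinuousOn.mul
    · apply ContinuousOn.div continuousOn_const (by fun_prop)
      intro s hs
      have : s < 1 := lt_of_le_of_lt hs.2 hx1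
      intro h; rw [sub_eq_zero] at h; exact absurd h (by linarith [this])
    · apply ContinuousOn.sub _ continuousOn_const
      apply Real.continuousOn_log.mono
      intro s hs
      exact ne_of_gt (lt_of_lt_of_le ha0 hs.1)
  rw [intervalIntegral.integral_eq_sub_of_hasDerivAt hderiv hcont]
  simp only [hH]
  ring

/-- Shuffle (tangential base-point) regularisation of `∫_{v⃗₀}^x ω₁ω₂` with
`ω₁ = dξ/ξ` and `ω₂ = dξ/(ξ-1) = dlog(1-ξ)`: cutting off the lower integration
limit at `v·ε`, the divergent iterated integral equals
`log(x/v)·log(1-x) + Li₂(x) + log ε · log(1-x) + o(1)` as `ε → 0⁺`, so its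
regularised (constant) term is `log(x/v)·log(1-x) + Li₂(x)`. -/
theorem regularised_iterated_integral_dilog (x v : ℝ)
    (hx0 : 0 < x) (hx1 : x < 1) (hv : 0 < v) :
    Tendsto
      (fun ε : ℝ =>
        iterIntR (v * ε) [fun t => 1 / (t - 1), fun t => 1 / t] x
          + Real.log ε * Real.log (1 - x))
      (𝓝[>] (0 : ℝ))
      (𝓝 (Real.log (x / v) * Real.log (1 - x) + Li2 x)) := by
  have hEq : ∀ᶠ ε in 𝓝[>] (0 : ℝ),
      iterIntR (v * ε) [fun t => 1 / (t - 1), fun t => 1 / t] x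
          + Real.log ε * Real.log (1 - x)
        = Real.log (x / v) * Real.log (1 - x) + Li2 x - Li2 (v * ε) := by
    have hmem : Set.Ioo (0 : ℝ) (x / v) ∈ 𝓝[>] (0 : ℝ) :=
      Ioo_mem_nhdsGT_of_mem ⟨le_refl 0, by positivity⟩
    filter_upwards [hmem] with ε hε
    have hε0 : 0 < ε := hε.1
    have ha0 : 0 < v * ε := by positivity
    have hax : v * ε < x := by
      have := hε.2
      calc v * ε < v * (x / v) := mul_lt_mul_of_pos_left this hv
        _ = x := by field_simp
    rw [iter_eval hx1 ha0 hax, Real.log_mul (ne_of_gt hv) (ne_of_gt hε0),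
      Real.log_div (ne_of_gt hx0) (ne_of_gt hv)]
    ring
  rw [tendsto_congr' hEq]
  have hLi : Tendsto (fun ε : ℝ => Li2 (v * ε)) (𝓝[>] (0 : ℝ)) (𝓝 0) := by
    have h1 : Tendsto (fun ε : ℝ => v * ε) (𝓝[>] (0 : ℝ)) (𝓝 0) := by
      have := ((continuous_mul_left v).tendsto 0).mono_left (nhdsWithin_le_nhds (s := Set.Ioi 0))
      simpa using this
    have h2 : ContinuousAt Li2 0 := (hasDerivAt_Li2 (by norm_num)).continuousAt
    have := h2.tendsto.comp h1
    rw [Li2_zero] at this; exact this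
  have := (tendsto_const_nhds (x := Real.log (x / v) * Real.log (1 - x) + Li2 x)
    (f := 𝓝[>] (0:ℝ))).sub hLi
  simpa using this
end

section
/- The Gauss hypergeometric function satisfies the quadratic twisted period relation: ₂F₁(α,β;γ;x)·₂F₁(1−α,1−β;2−γ;x) = ₂F₁(α+1−γ, β+1−γ; 2−γ; x)·₂F₁(γ−α, γ−β; γ; x), for parameters and x in a domain where all four series converge (e.g. |x| < 1 and no parameter a nonpositive integer). -/
/-- The Pochhammer symbol `(a)_n = a (a+1) ⋯ (a+n-1)`. -/
noncomputable def pochhammerC (a : ℂ) (n : ℕ) : ℂ :=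
  ∏ k ∈ Finset.range n, (a + k)

/-- The Gauss hypergeometric series `₂F₁(α,β;γ;x) = ∑ₙ (α)ₙ(β)ₙ/((γ)ₙ n!) xⁿ`. -/
noncomputable def hyp2F1 (α β γ x : ℂ) : ℂ :=
  ∑' n : ℕ, pochhammerC α n * pochhammerC β n / (pochhammerC γ n * (n.factorial : ℂ)) * x ^ n

namespace TPR
open Finset Filter

lemma poch_zero (a : ℂ) : pochhammerC a 0 = 1 := by simp [pochhammerC]

lemma poch_succ (a : ℂ) (n : ℕ) : pochhammerC a (n+1) = pochhammerC a n * (a + n) := by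
  simp [pochhammerC, Finset.prod_range_succ]

lemma poch_succ_left (a : ℂ) (n : ℕ) : pochhammerC a (n+1) = a * pochhammerC (a+1) n := by
  rw [pochhammerC, Finset.prod_range_succ']
  have : ∀ i ∈ Finset.range n, (a + ↑(i+1) : ℂ) = (a+1) + i := by intro i _; push_cast; ring
  rw [Finset.prod_congr rfl this]
  simp [pochhammerC, mul_comm]

lemma poch_one_eq (a : ℂ) : pochhammerC a 1 = a := by simp [pochhammerC]

lemma poch_add (a : ℂ) (m n : ℕ) :
    pochhammerC a (m + n) = pochhammerC a m * pochhammerC (a + m) n := by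
  induction n with
  | zero => simp [poch_zero]
  | succ n ih =>
      rw [show m + (n+1) = (m+n)+1 from rfl, poch_succ, ih, poch_succ]
      push_cast; ring

lemma poch_ne_zero {a : ℂ} (h : ∀ k : ℕ, a + k ≠ 0) (n : ℕ) : pochhammerC a n ≠ 0 :=
  Finset.prod_ne_zero_iff.2 fun k _ => h k

lemma poch_nat_one (n : ℕ) : pochhammerC 1 n = (n.factorial : ℂ) := by
  induction n with
  | zero => simp [poch_zero]
  | succ n ih => rw [poch_succ, ih]; push_cast [Nat.factorial_succ]; ring

noncomputable def Gf (a b c : ℂ) (n k : ℕ) : ℂ :=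
  -(k:ℂ) * ((k:ℂ)+c) * (n.choose k : ℂ) * pochhammerC a k * pochhammerC b k *
    pochhammerC (c+1-a-b) (n-k) * pochhammerC (c+1+k) (n-k)

lemma key (a b c : ℂ) (n k : ℕ) (hkn : k ≤ n) :
    (n.choose k : ℂ) * (pochhammerC a (k+1) * pochhammerC b (k+1) *
        pochhammerC (c-a-b) (n-k) * pochhammerC (c+(k+1:ℕ)) (n-k))
      + (n.choose k : ℂ) * (pochhammerC a k * pochhammerC b k *
        pochhammerC (c-a-b) (n+1-k) * pochhammerC (c+k) (n+1-k))
      - (c-a)*(c-b) * ((n.choose k : ℂ) * (pochhammerC a k * pochhammerC b k *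
        pochhammerC (c+1-a-b) (n-k) * pochhammerC (c+1+k) (n-k)))
    = Gf a b c n (k+1) - Gf a b c n k := by
  obtain ⟨j, rfl⟩ : ∃ j, n = k + j := ⟨n - k, by omega⟩
  rcases j with _ | m
  · simp only [Nat.add_zero, Nat.sub_self, Gf, Nat.choose_succ_self, Nat.choose_self,
      show k + 1 - (k+1) = 0 by omega, show k - k = 0 by omega, show k+1-k = 1 by omega,
      poch_zero, poch_one_eq, poch_succ a k, poch_succ b k, Nat.cast_zero, Nat.cast_one]
    push_cast
    ring
  · simp only [Gf, show k+(m+1)-k = m+1 by omega, show k+(m+1)+1-k = m+2 by omega,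
      show k+(m+1)-(k+1) = m by omega]
    push_cast
    have e1 : pochhammerC a (k+1) = pochhammerC a k * (a+(k:ℂ)) := poch_succ a k
    have e2 : pochhammerC b (k+1) = pochhammerC b k * (b+(k:ℂ)) := poch_succ b k
    have e3 : pochhammerC (c-a-b) (m+1) = (c-a-b) * pochhammerC (c+1-a-b) m := by
      rw [poch_succ_left, show c-a-b+1 = c+1-a-b from by ring]
    have e4 : pochhammerC (c-a-b) (m+2) = (c-a-b) * pochhammerC (c+1-a-b) m * (c-a-b+((m:ℂ)+1)) := by
      rw [show m+2 = m+1+1 from rfl, poch_succ, e3]; push_cast; ring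
    have e5 : pochhammerC (c+((k:ℂ)+1)) (m+1) = (c+((k:ℂ)+1)) * pochhammerC (c+1+((k:ℂ)+1)) m := by
      rw [poch_succ_left, show c+((k:ℂ)+1)+1 = c+1+((k:ℂ)+1) from by ring]
    have e6 : pochhammerC (c+(k:ℂ)) (m+2) = (c+(k:ℂ)) * ((c+((k:ℂ)+1)) * pochhammerC (c+1+((k:ℂ)+1)) m) := by
      rw [show m+2 = m+1+1 from rfl, poch_succ_left, show c+(k:ℂ)+1 = c+((k:ℂ)+1) from by ring, e5]
    have e7 : pochhammerC (c+1-a-b) (m+1) = pochhammerC (c+1-a-b) m * (c+1-a-b+(m:ℂ)) := poch_succ _ m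
    have e8 : pochhammerC (c+1+(k:ℂ)) (m+1) = (c+1+(k:ℂ)) * pochhammerC (c+1+((k:ℂ)+1)) m := by
      rw [poch_succ_left, show c+1+(k:ℂ)+1 = c+1+((k:ℂ)+1) from by ring]
    have hch : (((k+(m+1)).choose (k+1) : ℕ) : ℂ) * ((k:ℂ)+1) = (((k+(m+1)).choose k : ℕ) : ℂ) * ((m:ℂ)+1) := by
      have h := Nat.choose_succ_right_eq (k+(m+1)) k
      rw [show k+(m+1)-k = m+1 from by omega] at h
      exact_mod_cast congrArg (Nat.cast : ℕ → ℂ) h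
    rw [e1, e2, e3, e4, e5, e6, e7, e8]
    linear_combination (((k:ℂ)+1+c) * (pochhammerC a k * (a+(k:ℂ))) * (pochhammerC b k * (b+(k:ℂ))) * pochhammerC (c+1-a-b) m * pochhammerC (c+1+((k:ℂ)+1)) m) * hch
noncomputable def Tsum (n : ℕ) (a b c : ℂ) : ℂ :=
  ∑ k ∈ range (n+1), (n.choose k : ℂ) *
    (pochhammerC a k * pochhammerC b k * pochhammerC (c-a-b) (n-k) * pochhammerC (c+k) (n-k))

lemma Tsum_rec (n : ℕ) (a b c : ℂ) :
    Tsum (n+1) a b c = (c-a) * (c-b) * Tsum n a b (c+1) := by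
  have hg : ∀ j : ℕ, (pochhammerC a j * pochhammerC b j *
      pochhammerC (c-a-b) (n+1-j) * pochhammerC (c+j) (n+1-j)) =
      (fun j : ℕ => pochhammerC a j * pochhammerC b j *
      pochhammerC (c-a-b) (n+1-j) * pochhammerC (c+j) (n+1-j)) j := fun _ => rfl
  set g : ℕ → ℂ := fun j => pochhammerC a j * pochhammerC b j *
    pochhammerC (c-a-b) (n+1-j) * pochhammerC (c+j) (n+1-j) with hgdef
  have h1 : Tsum (n+1) a b c
      = ∑ k ∈ range (n+1), ((n.choose k : ℂ) * g (k+1) + (n.choose (k+1) : ℂ) * g (k+1)) + g 0 := by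
    rw [Tsum, Finset.sum_range_succ']
    congr 1
    · exact Finset.sum_congr rfl fun k _ => by
        simp only [hgdef, Nat.choose_succ_succ]; push_cast; ring
    · simp [hgdef]
  have h2 : ∑ k ∈ range (n+1), (n.choose (k+1) : ℂ) * g (k+1) + g 0
      = ∑ k ∈ range (n+1), (n.choose k : ℂ) * g k := by
    have e1 := Finset.sum_range_succ' (fun k => (n.choose k : ℂ) * g k) (n+1)
    have e2 := Finset.sum_range_succ (fun k => (n.choose k : ℂ) * g k) (n+1)
    simp only [Nat.choose_succ_self, Nat.cast_zero, zero_mul, add_zero,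
      Nat.choose_zero_right, Nat.cast_one, one_mul] at e1 e2
    rw [← e1, e2]
  have h3 : Tsum (n+1) a b c = ∑ k ∈ range (n+1),
      ((n.choose k : ℂ) * g (k+1) + (n.choose k : ℂ) * g k) := by
    rw [h1, Finset.sum_add_distrib, add_assoc, h2, ← Finset.sum_add_distrib]
  have hsub : Tsum (n+1) a b c - (c-a)*(c-b) * Tsum n a b (c+1) = 0 := by
    rw [h3, Tsum, Finset.mul_sum, ← Finset.sum_sub_distrib]
    have : ∀ k ∈ range (n+1),
        ((n.choose k : ℂ) * g (k+1) + (n.choose k : ℂ) * g k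
          - (c-a)*(c-b) * ((n.choose k : ℂ) * (pochhammerC a k * pochhammerC b k *
            pochhammerC (c+1-a-b) (n-k) * pochhammerC (c+1+k) (n-k))))
        = Gf a b c n (k+1) - Gf a b c n k := by
      intro k hk
      have hkn : k ≤ n := Nat.lt_succ_iff.mp (Finset.mem_range.mp hk)
      have := key a b c n k hkn
      simp only [hgdef]
      rw [show n+1-(k+1) = n-k from by omega]
      push_cast at this ⊢
      linear_combination this
    rw [Finset.sum_congr rfl this, Finset.sum_range_sub (Gf a b c n) (n+1)]
    simp [Gf, Nat.choose_succ_self]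
  linear_combination hsub

lemma Tsum_eval (n : ℕ) (a b c : ℂ) :
    Tsum n a b c = pochhammerC (c-a) n * pochhammerC (c-b) n := by
  induction n generalizing c with
  | zero => simp [Tsum, poch_zero]
  | succ n ih =>
      rw [Tsum_rec, ih, poch_succ_left (c-a), poch_succ_left (c-b)]
      rw [show c-a+1 = c+1-a from by ring, show c-b+1 = c+1-b from by ring]
      ring
/-- coefficient of the ₂F₁ series -/
noncomputable def co (a b c : ℂ) (n : ℕ) : ℂ :=
  pochhammerC a n * pochhammerC b n / (pochhammerC c n * (n.factorial : ℂ))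

lemma hyp2F1_eq (a b c x : ℂ) : hyp2F1 a b c x = ∑' n : ℕ, co a b c n * x ^ n := rfl

lemma factorial_ne (n : ℕ) : ((n.factorial : ℕ) : ℂ) ≠ 0 := by
  exact_mod_cast Nat.cast_ne_zero.mpr n.factorial_ne_zero

/-- Pfaff–Saalschütz in divided (series-coefficient) form. -/
lemma PS_div (a b c : ℂ) (hc : ∀ k : ℕ, c + k ≠ 0) (n : ℕ) :
    ∑ k ∈ range (n+1), co a b c k * (pochhammerC (c-a-b) (n-k) / ((n-k).factorial : ℂ))
      = co (c-a) (c-b) c n := by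
  have hstep : ∀ k ∈ range (n+1),
      co a b c k * (pochhammerC (c-a-b) (n-k) / ((n-k).factorial : ℂ))
      = (n.choose k : ℂ) * (pochhammerC a k * pochhammerC b k *
          pochhammerC (c-a-b) (n-k) * pochhammerC (c+k) (n-k))
        / (pochhammerC c n * (n.factorial : ℂ)) := by
    intro k hk
    have hkn : k ≤ n := Nat.lt_succ_iff.mp (Finset.mem_range.mp hk)
    have hsplit : pochhammerC c n = pochhammerC c k * pochhammerC (c+k) (n-k) := by
      rw [← poch_add c k (n-k), Nat.add_sub_cancel' hkn]
    have hfact : (n.factorial : ℂ) = (n.choose k : ℂ) * (k.factorial : ℂ) * ((n-k).factorial : ℂ) := by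
      rw [← Nat.cast_mul, ← Nat.cast_mul, Nat.choose_mul_factorial_mul_factorial hkn]
    have h1 : pochhammerC c k ≠ 0 := poch_ne_zero hc k
    have h2 : pochhammerC (c+k) (n-k) ≠ 0 := by
      apply poch_ne_zero
      intro j
      have := hc (k+j)
      push_cast at this ⊢
      intro hzero; apply this; rw [← hzero]; ring
    have h3 : ((k.factorial : ℕ) : ℂ) ≠ 0 := factorial_ne k
    have h4 : (((n-k).factorial : ℕ) : ℂ) ≠ 0 := factorial_ne (n-k)
    have h5 : ((n.choose k : ℕ) : ℂ) ≠ 0 := by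
      exact_mod_cast Nat.cast_ne_zero.mpr (Nat.choose_pos hkn).ne'
    rw [co, hsplit, hfact]
    field_simp
  rw [Finset.sum_congr rfl hstep, ← Finset.sum_div,
    show (∑ k ∈ range (n+1), (n.choose k : ℂ) *
      (pochhammerC a k * pochhammerC b k * pochhammerC (c-a-b) (n-k) * pochhammerC (c+k) (n-k)))
      = pochhammerC (c-a) n * pochhammerC (c-b) n from Tsum_eval n a b c, co]

/-- ratio recurrence for coefficients -/
lemma co_succ (a b c : ℂ) (hc : ∀ k : ℕ, c + k ≠ 0) (n : ℕ) :
    co a b c (n+1) = co a b c n * ((a+n)*(b+n) / ((c+n)*((n:ℂ)+1))) := by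
  rw [co, co, poch_succ a, poch_succ b, poch_succ c]
  have h1 : pochhammerC c n ≠ 0 := poch_ne_zero hc n
  have h2 : (c+(n:ℂ)) ≠ 0 := hc n
  have h3 : ((n.factorial : ℕ) : ℂ) ≠ 0 := factorial_ne n
  have h4 : ((n:ℂ)+1) ≠ 0 := by
    have : (((n+1 : ℕ)) : ℂ) ≠ 0 := Nat.cast_ne_zero.mpr (Nat.succ_ne_zero n)
    push_cast at this; exact this
  rw [Nat.factorial_succ]
  push_cast
  field_simp

lemma tendsto_ratio (u v : ℂ) (hv : ∀ n : ℕ, v + n ≠ 0) :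
    Tendsto (fun n : ℕ => (u + n) / (v + n)) atTop (nhds 1) := by
  have hnorm : Tendsto (fun n : ℕ => ‖v + (n:ℂ)‖) atTop atTop := by
    apply tendsto_atTop_mono' _ (_ : ∀ᶠ n : ℕ in atTop, (n:ℝ) - ‖v‖ ≤ ‖v + (n:ℂ)‖)
    · exact (tendsto_natCast_atTop_atTop (R := ℝ)).atTop_add tendsto_const_nhds
    · filter_upwards with n
      calc (n:ℝ) - ‖v‖ = ‖(n:ℂ)‖ - ‖v‖ := by simp
        _ ≤ ‖v + (n:ℂ)‖ := by
            have := norm_sub_le (v + (n:ℂ)) v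
            simp at this ⊢; linarith [this]
  have hz : Tendsto (fun n : ℕ => (u - v) / (v + n)) atTop (nhds 0) := by
    rw [show (fun n : ℕ => (u - v) / (v + n)) = (fun n : ℕ => (u - v) * (v + n)⁻¹) from by
      funext n; rw [div_eq_mul_inv]]
    rw [show (0:ℂ) = (u-v) * 0 from by ring]
    exact Filter.Tendsto.const_mul _ (tendsto_zero_iff_norm_tendsto_zero.mpr (by
      simp only [norm_inv]; exact hnorm.inv_tendsto_atTop))
  have : ∀ n : ℕ, (u + n) / (v + n) = 1 + (u - v) / (v + n) := by
    intro n
    field_simp [hv n]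
    ring
  rw [show (fun n : ℕ => (u + n) / (v + n)) = fun n : ℕ => 1 + (u - v)/(v + n) from funext this]
  simpa using (tendsto_const_nhds (x := (1:ℂ))).add hz

lemma summable_norm_co (a b c x : ℂ) (hx : ‖x‖ < 1) (hc : ∀ k : ℕ, c + k ≠ 0) :
    Summable (fun n : ℕ => ‖co a b c n * x ^ n‖) := by
  set r : ℝ := (‖x‖ + 1) / 2 with hr
  have hxr : ‖x‖ < r := by rw [hr]; linarith
  have hr1 : r < 1 := by rw [hr]; linarith
  have h1 : ∀ k : ℕ, (1:ℂ) + k ≠ 0 := by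
    intro k
    have : (((k+1 : ℕ)) : ℂ) ≠ 0 := Nat.cast_ne_zero.mpr (Nat.succ_ne_zero k)
    push_cast at this; intro hh; apply this; rw [← hh]; ring
  have hq : Tendsto (fun n : ℕ => ‖((a+n)*(b+n) / ((c+n)*((n:ℂ)+1))) * x‖) atTop
      (nhds (‖x‖)) := by
    have t1 := tendsto_ratio a c hc
    have t2 := tendsto_ratio b 1 h1
    have heq : ∀ n : ℕ, ((a+n)*(b+n) / ((c+n)*((n:ℂ)+1))) * x
        = ((a+n)/(c+n)) * ((b+n)/(1+n)) * x := by
      intro n; rw [div_mul_div_comm]; ring_nf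
    rw [show (fun n : ℕ => ‖((a+n)*(b+n) / ((c+n)*((n:ℂ)+1))) * x‖)
        = fun n : ℕ => ‖((a+n)/(c+n)) * ((b+n)/(1+n)) * x‖ from funext fun n => by rw [heq]]
    have : Tendsto (fun n : ℕ => ((a+n)/(c+n)) * ((b+n)/(1+n)) * x) atTop (nhds x) := by
      have := (t1.mul t2).mul (tendsto_const_nhds (x := x))
      simpa using this
    have := this.norm
    simpa using this
  have hev : ∀ᶠ n : ℕ in atTop, ‖co a b c (n+1) * x ^ (n+1)‖ ≤ r * ‖co a b c n * x ^ n‖ := by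
    filter_upwards [hq.eventually_le_const hxr] with n hn
    have hrec := co_succ a b c hc n
    calc ‖co a b c (n+1) * x ^ (n+1)‖
        = ‖co a b c n * x ^ n‖ * ‖((a+n)*(b+n) / ((c+n)*((n:ℂ)+1))) * x‖ := by
          rw [hrec, pow_succ]; rw [← norm_mul]; ring_nf
      _ ≤ ‖co a b c n * x ^ n‖ * r := by
          exact mul_le_mul_of_nonneg_left hn (norm_nonneg _)
      _ = r * ‖co a b c n * x ^ n‖ := by ring
  apply summable_of_ratio_norm_eventually_le hr1
  filter_upwards [hev] with n hn
  simpa [Real.norm_of_nonneg (norm_nonneg _)] using hn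

lemma summable_co (a b c x : ℂ) (hx : ‖x‖ < 1) (hc : ∀ k : ℕ, c + k ≠ 0) :
    Summable (fun n : ℕ => co a b c n * x ^ n) :=
  (summable_norm_co a b c x hx hc).of_norm

lemma one_plus_ne (k : ℕ) : (1:ℂ) + k ≠ 0 := by
  have : (((k+1 : ℕ)) : ℂ) ≠ 0 := Nat.cast_ne_zero.mpr (Nat.succ_ne_zero k)
  push_cast at this; intro hh; apply this; rw [← hh]; ring


lemma co_one_one (s : ℂ) (n : ℕ) : co s 1 1 n = pochhammerC s n / (n.factorial : ℂ) := by
  rw [co, poch_nat_one]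
  rw [div_eq_div_iff (by exact mul_ne_zero (factorial_ne n) (factorial_ne n)) (factorial_ne n)]
  ring

/-- Euler's transformation in product form. -/
lemma euler (a b c x : ℂ) (hx : ‖x‖ < 1) (hc : ∀ k : ℕ, c + k ≠ 0) :
    hyp2F1 a b c x * hyp2F1 (c-a-b) 1 1 x = hyp2F1 (c-a) (c-b) c x := by
  rw [hyp2F1_eq, hyp2F1_eq, hyp2F1_eq]
  rw [tsum_mul_tsum_eq_tsum_sum_range_of_summable_norm
    (summable_norm_co a b c x hx hc) (summable_norm_co (c-a-b) 1 1 x hx one_plus_ne)]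
  apply tsum_congr
  intro n
  have hstep : ∀ k ∈ range (n+1),
      co a b c k * x ^ k * (co (c-a-b) 1 1 (n-k) * x ^ (n-k))
      = co a b c k * (pochhammerC (c-a-b) (n-k) / ((n-k).factorial : ℂ)) * x ^ n := by
    intro k hk
    have hkn : k ≤ n := Nat.lt_succ_iff.mp (Finset.mem_range.mp hk)
    rw [co_one_one]
    rw [show x ^ n = x ^ k * x ^ (n-k) from by rw [← pow_add, Nat.add_sub_cancel' hkn]]
    ring
  rw [Finset.sum_congr rfl hstep, ← Finset.sum_mul, PS_div a b c hc n]

lemma hyp_snd_zero (a c x : ℂ) : hyp2F1 a 0 c x = 1 := by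
  rw [hyp2F1_eq]
  rw [tsum_eq_single 0 (by
    intro n hn
    obtain ⟨m, rfl⟩ : ∃ m, n = m + 1 := ⟨n - 1, by omega⟩
    rw [co, poch_succ_left 0 m]
    simp)]
  simp [co, poch_zero]

end TPR

/-- The twisted period relation (Cho–Matsumoto) for the Gauss hypergeometric
function: `₂F₁(α,β;γ;x) ₂F₁(1-α,1-β;2-γ;x)
  = ₂F₁(α+1-γ,β+1-γ;2-γ;x) ₂F₁(γ-α,γ-β;γ;x)` for `|x| < 1` and `γ`, `2-γ` not
nonpositive integers. -/
theorem twisted_period_relation_2F1 (α β γ x : ℂ)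
    (hx : ‖x‖ < 1)
    (hγ : ∀ n : ℕ, γ ≠ -(n : ℂ))
    (hγ' : ∀ n : ℕ, 2 - γ ≠ -(n : ℂ)) :
    hyp2F1 α β γ x * hyp2F1 (1 - α) (1 - β) (2 - γ) x
      = hyp2F1 (α + 1 - γ) (β + 1 - γ) (2 - γ) x * hyp2F1 (γ - α) (γ - β) γ x := by
  have hγc : ∀ k : ℕ, γ + k ≠ 0 := by
    intro k hk; exact hγ k (by linear_combination hk)
  have hγ'c : ∀ k : ℕ, (2 - γ) + k ≠ 0 := by
    intro k hk; exact hγ' k (by linear_combination hk)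
  have E1 := TPR.euler α β γ x hx hγc
  have E2 := TPR.euler (1-α) (1-β) (2-γ) x hx hγ'c
  rw [show (2-γ) - (1-α) - (1-β) = α+β-γ from by ring,
    show (2-γ) - (1-α) = α+1-γ from by ring,
    show (2-γ) - (1-β) = β+1-γ from by ring] at E2
  have V := TPR.euler (γ-α-β) 1 1 x hx TPR.one_plus_ne
  rw [show (1:ℂ) - (γ-α-β) - 1 = α+β-γ from by ring,
    show (1:ℂ) - 1 = 0 from by ring, TPR.hyp_snd_zero] at V
  rw [← E1, ← E2]
  linear_combination (-(hyp2F1 α β γ x * hyp2F1 (1-α) (1-β) (2-γ) x)) * V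
end
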